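/- Let T and z be jointly distributed random variables taking values in finite nonempty sets, and define the Bayes error rate Pe := 1 − E_z[max_t P(T = t | z)] (the lowest achievable error of any classifier predicting T from z). Then −ln(1 − Pe) ≤ H(T|z); equivalently, Pe ≤ 1 − exp(−H(T|z)). -/

import Mathlib

open scoped BigOperators

/-- Probability that the random variable `X` (on a finite sample space `Ω`
with probability mass function `p`) takes the value `x`. -/
noncomputable def pr {Ω S : Type*} [Fintype Ω] [DecidableEq S]
    (p : Ω → ℝ) (X : Ω → S) (x : S) : ℝ :=
  ∑ ω, if X ω = x then p ω else 0

/-- Shannon entropy (natural logarithm) of a random variable `X`. -/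
noncomputable def entropy {Ω S : Type*} [Fintype Ω] [Fintype S] [DecidableEq S]
    (p : Ω → ℝ) (X : Ω → S) : ℝ :=
  -∑ x, pr p X x * Real.log (pr p X x)

/-- Conditional Shannon entropy `H(X | Y)`. -/
noncomputable def condEntropy {Ω S U : Type*} [Fintype Ω] [Fintype S] [DecidableEq S]
    [Fintype U] [DecidableEq U] (p : Ω → ℝ) (X : Ω → S) (Y : Ω → U) : ℝ :=
  entropy p (fun ω => (X ω, Y ω)) - entropy p Y

/-- Mutual information `I(X; Y)`. -/
noncomputable def mi {Ω S U : Type*} [Fintype Ω] [Fintype S] [DecidableEq S]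
    [Fintype U] [DecidableEq U] (p : Ω → ℝ) (X : Ω → S) (Y : Ω → U) : ℝ :=
  entropy p X + entropy p Y - entropy p (fun ω => (X ω, Y ω))

/-- Conditional mutual information `I(X; Y | Z)`. -/
noncomputable def cmi {Ω S U W : Type*} [Fintype Ω] [Fintype S] [DecidableEq S]
    [Fintype U] [DecidableEq U] [Fintype W] [DecidableEq W]
    (p : Ω → ℝ) (X : Ω → S) (Y : Ω → U) (Z : Ω → W) : ℝ :=
  mi p X (fun ω => (Y ω, Z ω)) - mi p X Z

/-- Conditional probability `P(X = x | Y = y)` (with junk value `0` when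
`P(Y = y) = 0`, via real division). -/
noncomputable def condProb {Ω S U : Type*} [Fintype Ω] [DecidableEq S] [DecidableEq U]
    (p : Ω → ℝ) (X : Ω → S) (Y : Ω → U) (x : S) (y : U) : ℝ :=
  pr p (fun ω => (X ω, Y ω)) (x, y) / pr p Y y

/-- Bayes error rate `Pe = 1 − E_{p(z)}[max_t P(T = t | z)]`, the lowest
achievable error of any classifier predicting `T` from `Z`. -/
noncomputable def bayesError {Ω A B : Type*} [Fintype Ω]
    [Fintype A] [DecidableEq A] [Nonempty A] [Fintype B] [DecidableEq B]
    (p : Ω → ℝ) (T : Ω → A) (Z : Ω → B) : ℝ :=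
  1 - ∑ z, pr p Z z * ⨆ t, condProb p T Z t z

lemma pr_nonneg {Ω S : Type*} [Fintype Ω] [DecidableEq S]
    (p : Ω → ℝ) (hp : ∀ ω, 0 ≤ p ω) (X : Ω → S) (x : S) : 0 ≤ pr p X x := by
  unfold pr
  refine Finset.sum_nonneg fun ω _ => ?_
  split
  · exact hp ω
  · exact le_rfl

lemma sum_pr_pair {Ω A B : Type*} [Fintype Ω] [Fintype A] [DecidableEq A]
    [Fintype B] [DecidableEq B] (p : Ω → ℝ) (T : Ω → A) (Z : Ω → B) (z : B) :
    ∑ t, pr p (fun ω => (T ω, Z ω)) (t, z) = pr p Z z := by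
  unfold pr
  rw [Finset.sum_comm]
  refine Finset.sum_congr rfl fun ω _ => ?_
  by_cases h : Z ω = z <;> simp [Prod.ext_iff, h, Finset.sum_ite_eq]

lemma sum_pr {Ω B : Type*} [Fintype Ω] [Fintype B] [DecidableEq B]
    (p : Ω → ℝ) (Z : Ω → B) : ∑ z, pr p Z z = ∑ ω, p ω := by
  unfold pr
  rw [Finset.sum_comm]
  simp

lemma keyB {A : Type*} [Fintype A] [Nonempty A] (r : A → ℝ) (hr : ∀ t, 0 ≤ r t)
    (q : ℝ) (hq : ∑ t, r t = q) (hqpos : 0 < q) : 0 < ⨆ t, r t / q := by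
  have hbdd : BddAbove (Set.range fun t => r t / q) := Set.Finite.bddAbove (Set.finite_range _)
  by_contra hle
  push_neg at hle
  have hall : ∀ t, r t = 0 := by
    intro t
    by_contra hne
    have hrt : 0 < r t := lt_of_le_of_ne (hr t) (Ne.symm hne)
    have h1 : 0 < r t / q := div_pos hrt hqpos
    have h2 : r t / q ≤ ⨆ t, r t / q := le_ciSup hbdd t
    linarith
  rw [Finset.sum_congr rfl fun t _ => hall t] at hq
  simp at hq
  linarith

lemma keyA {A : Type*} [Fintype A] [Nonempty A] (r : A → ℝ) (hr : ∀ t, 0 ≤ r t)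
    (q : ℝ) (hq : ∑ t, r t = q) :
    q * (-Real.log (⨆ t, r t / q)) ≤ q * Real.log q - ∑ t, r t * Real.log (r t) := by
  have hq0 : 0 ≤ q := hq ▸ Finset.sum_nonneg fun t _ => hr t
  rcases eq_or_lt_of_le hq0 with h0 | hqpos
  · have hr0 : ∀ t, r t = 0 := by
      intro t
      have h := (Finset.sum_eq_zero_iff_of_nonneg (fun t _ => hr t)).mp (hq.trans h0.symm)
      exact h t (Finset.mem_univ t)
    simp [hr0, ← h0]
  · set m := ⨆ t, r t / q with hm
    have hbdd : BddAbove (Set.range fun t => r t / q) := Set.Finite.bddAbove (Set.finite_range _)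
    have hmle : ∀ t, r t / q ≤ m := fun t => le_ciSup hbdd t
    have hmpos : 0 < m := keyB r hr q hq hqpos
    have hstep : ∀ t, r t * Real.log (r t / q) ≤ r t * Real.log m := by
      intro t
      rcases eq_or_lt_of_le (hr t) with h | h
      · simp [← h]
      · exact mul_le_mul_of_nonneg_left
          (Real.log_le_log (div_pos h hqpos) (hmle t)) (hr t)
    have hsplit : ∀ t, r t * Real.log (r t) = r t * Real.log (r t / q) + r t * Real.log q := by
      intro t
      rcases eq_or_lt_of_le (hr t) with h | h
      · simp [← h]
      · rw [Real.log_div (ne_of_gt h) (ne_of_gt hqpos)]; ring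
    have hsum : ∑ t, r t * Real.log (r t) ≤ q * Real.log m + q * Real.log q := by
      calc ∑ t, r t * Real.log (r t)
          = ∑ t, r t * Real.log (r t / q) + q * Real.log q := by
            rw [Finset.sum_congr rfl fun t _ => hsplit t, Finset.sum_add_distrib,
              ← Finset.sum_mul, hq]
        _ ≤ ∑ t, r t * Real.log m + q * Real.log q := by
            exact add_le_add (Finset.sum_le_sum fun t _ => hstep t) le_rfl
        _ = q * Real.log m + q * Real.log q := by rw [← Finset.sum_mul, hq]
    linarith [hsum]

lemma condEntropy_eq {Ω A B : Type*} [Fintype Ω] [Fintype A] [DecidableEq A]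
    [Fintype B] [DecidableEq B] (p : Ω → ℝ) (T : Ω → A) (Z : Ω → B) :
    condEntropy p T Z = ∑ z, (pr p Z z * Real.log (pr p Z z)
      - ∑ t, pr p (fun ω => (T ω, Z ω)) (t, z)
          * Real.log (pr p (fun ω => (T ω, Z ω)) (t, z))) := by
  unfold condEntropy entropy
  rw [Fintype.sum_prod_type, Finset.sum_comm, Finset.sum_sub_distrib]
  ring

/-- **Fano-type bound on the Bayes error rate.** For finite random variables
`T` and `z`, the Bayes error rate `Pe = 1 − E_z[max_t P(T = t | z)]` satisfies
`−ln(1 − Pe) ≤ H(T | z)`, equivalently `Pe ≤ 1 − exp(−H(T | z))`. -/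
theorem bayes_error_le
    {Ω A B : Type*} [Fintype Ω]
    [Fintype A] [DecidableEq A] [Nonempty A]
    [Fintype B] [DecidableEq B] [Nonempty B]
    (p : Ω → ℝ) (hp : ∀ ω, 0 ≤ p ω) (hp1 : ∑ ω, p ω = 1)
    (T : Ω → A) (Z : Ω → B) :
    -Real.log (1 - bayesError p T Z) ≤ condEntropy p T Z ∧
    bayesError p T Z ≤ 1 - Real.exp (-(condEntropy p T Z)) := by
  classical
  -- abbreviations (as plain functions, definitionally transparent)
  have hcond : ∀ (t : A) (z : B), condProb p T Z t z
      = pr p (fun ω => (T ω, Z ω)) (t, z) / pr p Z z := fun _ _ => rfl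
  have hrnn : ∀ (t : A) (z : B), 0 ≤ pr p (fun ω => (T ω, Z ω)) (t, z) :=
    fun t z => pr_nonneg p hp _ _
  have hqnn : ∀ z : B, 0 ≤ pr p Z z := fun z => pr_nonneg p hp _ _
  have hsumt : ∀ z : B, ∑ t, pr p (fun ω => (T ω, Z ω)) (t, z) = pr p Z z :=
    sum_pr_pair p T Z
  have hq1 : ∑ z, pr p Z z = 1 := by rw [sum_pr, hp1]
  have hmeq : ∀ z : B, (⨆ t, condProb p T Z t z)
      = ⨆ t, pr p (fun ω => (T ω, Z ω)) (t, z) / pr p Z z := by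
    intro z; rfl
  have hmnn : ∀ z : B, 0 ≤ ⨆ t, condProb p T Z t z := by
    intro z
    rw [hmeq]
    have hbdd : BddAbove (Set.range fun t => pr p (fun ω => (T ω, Z ω)) (t, z) / pr p Z z) :=
      Set.Finite.bddAbove (Set.finite_range _)
    exact le_trans (div_nonneg (hrnn (Classical.arbitrary A) z) (hqnn z))
      (le_ciSup hbdd (Classical.arbitrary A))
  have hperz : ∀ z : B, pr p Z z * (-Real.log (⨆ t, condProb p T Z t z))
      ≤ pr p Z z * Real.log (pr p Z z)
        - ∑ t, pr p (fun ω => (T ω, Z ω)) (t, z)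
            * Real.log (pr p (fun ω => (T ω, Z ω)) (t, z)) := by
    intro z
    rw [hmeq]
    exact keyA _ (fun t => hrnn t z) _ (hsumt z)
  have hBE : 1 - bayesError p T Z = ∑ z, pr p Z z * ⨆ t, condProb p T Z t z := by
    unfold bayesError; ring
  -- the filter of positive-mass z's
  set s : Finset B := Finset.univ.filter (fun z => 0 < pr p Z z) with hs
  have hq0 : ∀ z ∉ s, pr p Z z = 0 := by
    intro z hz
    rw [hs] at hz
    simp only [Finset.mem_filter, Finset.mem_univ, true_and, not_lt] at hz
    exact le_antisymm hz (hqnn z)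
  have hw1 : ∑ z ∈ s, pr p Z z = 1 := by
    rw [← hq1]
    exact Finset.sum_subset (Finset.subset_univ s) (fun z _ hz => hq0 z hz)
  have hmem : ∀ z ∈ s, (⨆ t, condProb p T Z t z) ∈ Set.Ioi (0 : ℝ) := by
    intro z hz
    rw [hs] at hz
    simp only [Finset.mem_filter, Finset.mem_univ, true_and] at hz
    rw [hmeq]
    exact keyB _ (fun t => hrnn t z) _ (hsumt z) hz
  have hjensen := (strictConcaveOn_log_Ioi.concaveOn).le_map_sum
    (fun z _ => hqnn z) hw1 hmem
  simp only [smul_eq_mul] at hjensen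
  have hSeq : ∑ z ∈ s, pr p Z z * (⨆ t, condProb p T Z t z)
      = ∑ z, pr p Z z * ⨆ t, condProb p T Z t z :=
    Finset.sum_subset (Finset.subset_univ s) (fun z _ hz => by rw [hq0 z hz]; ring)
  -- first inequality
  have h1 : -Real.log (1 - bayesError p T Z) ≤ condEntropy p T Z := by
    rw [hBE, condEntropy_eq, ← hSeq]
    have step1 : -Real.log (∑ z ∈ s, pr p Z z * ⨆ t, condProb p T Z t z)
        ≤ ∑ z ∈ s, pr p Z z * (-Real.log (⨆ t, condProb p T Z t z)) := by
      have hneg : ∑ z ∈ s, pr p Z z * (-Real.log (⨆ t, condProb p T Z t z))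
          = -(∑ z ∈ s, pr p Z z * Real.log (⨆ t, condProb p T Z t z)) := by
        simp [mul_neg]
      rw [hneg]
      linarith [hjensen]
    have step2 : ∑ z ∈ s, pr p Z z * (-Real.log (⨆ t, condProb p T Z t z))
        ≤ ∑ z, (pr p Z z * Real.log (pr p Z z)
          - ∑ t, pr p (fun ω => (T ω, Z ω)) (t, z)
              * Real.log (pr p (fun ω => (T ω, Z ω)) (t, z))) := by
      have hfull : ∑ z ∈ s, pr p Z z * (-Real.log (⨆ t, condProb p T Z t z))
          = ∑ z, pr p Z z * (-Real.log (⨆ t, condProb p T Z t z)) :=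
        Finset.sum_subset (Finset.subset_univ s) (fun z _ hz => by rw [hq0 z hz]; ring)
      rw [hfull]
      exact Finset.sum_le_sum fun z _ => hperz z
    linarith
  -- positivity of 1 - Pe
  have hsne : s.Nonempty := by
    by_contra h
    rw [Finset.not_nonempty_iff_eq_empty] at h
    rw [h, Finset.sum_empty] at hw1
    norm_num at hw1
  obtain ⟨z0, hz0⟩ := hsne
  have hz0pos : 0 < pr p Z z0 := by
    have := hz0; rw [hs] at this
    simpa using this
  have hSpos : 0 < 1 - bayesError p T Z := by
    rw [hBE]
    have hterm : 0 < pr p Z z0 * ⨆ t, condProb p T Z t z0 :=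
      mul_pos hz0pos (hmem z0 hz0)
    have hle : pr p Z z0 * (⨆ t, condProb p T Z t z0)
        ≤ ∑ z, pr p Z z * ⨆ t, condProb p T Z t z :=
      Finset.single_le_sum (fun z _ => mul_nonneg (hqnn z) (hmnn z)) (Finset.mem_univ z0)
    linarith
  refine ⟨h1, ?_⟩
  have h2 : Real.exp (-(condEntropy p T Z)) ≤ 1 - bayesError p T Z := by
    have hle : -(condEntropy p T Z) ≤ Real.log (1 - bayesError p T Z) := by linarith
    calc Real.exp (-(condEntropy p T Z))
        ≤ Real.exp (Real.log (1 - bayesError p T Z)) := Real.exp_le_exp.mpr hle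
      _ = 1 - bayesError p T Z := Real.exp_log hSpos
  linarith
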